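/- Let (Ω, P) be a probability space and K ≥ 2 an integer number of arms with unique best arm * (maximal mean μ_*). Let c > 0 and n > 0 be reals. Suppose each suboptimal arm i is sampled n_i times with n_i ≥ c√n/Δ_i², where Δ_i = μ_* − μ_i > 0, and the best arm is sampled n_* times with n_* ≥ n_i for all i ≠ *; all samples are jointly independent, take values in [0,1], and each sample of arm i has expectation μ_i. Let X̄_i denote the sample mean of arm i and let J be any random arm index, measurable with respect to the samples, such that X̄_J = max_i X̄_i. Then the simple regret satisfies E[μ_* − μ_J] ≤ 2·Σ_{i ≠ *} Δ_i · exp(−c√n/2). -/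

import Mathlib

open MeasureTheory ProbabilityTheory

section AuxHoeffding
open Real

lemma hoeff_denom_pos {p : ℝ} (hp : p ∈ Set.Icc (0:ℝ) 1) (t : ℝ) :
    0 < 1 - p + p * Real.exp t := by
  obtain ⟨h0, h1⟩ := hp
  rcases h1.eq_or_lt with h | h
  · subst h; simpa using Real.exp_pos t
  · nlinarith [Real.exp_pos t, mul_nonneg h0 (Real.exp_pos t).le]

/-- Analytic core of Hoeffding's lemma for `[0,1]`-valued variables. -/
lemma hoeff_analytic {p : ℝ} (hp : p ∈ Set.Icc (0:ℝ) 1) {t : ℝ} (ht : 0 ≤ t) :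
    1 - p + p * Real.exp t ≤ Real.exp (t * p + t ^ 2 / 8) := by
  set d : ℝ → ℝ := fun s => 1 - p + p * Real.exp s with hd_def
  have hdpos : ∀ s, 0 < d s := fun s => hoeff_denom_pos hp s
  have hd : ∀ s : ℝ, HasDerivAt d (p * Real.exp s) s := by
    intro s
    exact ((Real.hasDerivAt_exp s).const_mul p).const_add (1 - p)
  -- φ = derivative of h
  set φ : ℝ → ℝ := fun s => p + s / 4 - p * Real.exp s / d s with hφ_def
  have hφderiv : ∀ s : ℝ, HasDerivAt φ
      (1 / 4 - (p * Real.exp s * d s - p * Real.exp s * (p * Real.exp s)) / d s ^ 2) s := by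
    intro s
    have h1 : HasDerivAt (fun s : ℝ => p + s / 4) (1 / 4) s := by
      simpa using ((hasDerivAt_id s).div_const 4).const_add p
    have h2 : HasDerivAt (fun s => p * Real.exp s / d s)
        ((p * Real.exp s * d s - p * Real.exp s * (p * Real.exp s)) / d s ^ 2) s :=
      ((Real.hasDerivAt_exp s).const_mul p).div (hd s) (hdpos s).ne'
    exact h1.sub h2
  have hφderiv_nonneg : ∀ s : ℝ,
      0 ≤ 1 / 4 - (p * Real.exp s * d s - p * Real.exp s * (p * Real.exp s)) / d s ^ 2 := by
    intro s
    have hds := hdpos s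
    set q : ℝ := p * Real.exp s / d s with hq
    have key : (p * Real.exp s * d s - p * Real.exp s * (p * Real.exp s)) / d s ^ 2
        = q - q ^ 2 := by
      rw [hq]
      field_simp
    rw [key]
    nlinarith [sq_nonneg (2 * q - 1)]
  -- φ is monotone on [0, ∞), and φ 0 = 0
  have hφmono : MonotoneOn φ (Set.Ici (0:ℝ)) := by
    apply monotoneOn_of_deriv_nonneg (convex_Ici 0)
    · exact fun s _ => (hφderiv s).continuousAt.continuousWithinAt
    · exact fun s _ => (hφderiv s).differentiableAt.differentiableWithinAt
    · intro s _
      rw [(hφderiv s).deriv]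
      exact hφderiv_nonneg s
  have hφ0 : φ 0 = 0 := by simp [hφ_def, hd_def]
  have hφnonneg : ∀ s ∈ Set.Ici (0:ℝ), 0 ≤ φ s := by
    intro s hs
    have := hφmono (Set.self_mem_Ici) hs hs
    rw [hφ0] at this
    exact this
  -- h = t*p + t^2/8 - log (d t), h' = φ
  set h : ℝ → ℝ := fun s => s * p + s ^ 2 / 8 - Real.log (d s) with hh_def
  have hhderiv : ∀ s : ℝ, HasDerivAt h (φ s) s := by
    intro s
    have h1 : HasDerivAt (fun s : ℝ => s * p + s ^ 2 / 8) (p + 2 * s / 8) s := by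
      have := ((hasDerivAt_pow 2 s).div_const 8)
      exact (((hasDerivAt_id' s).mul_const p).add this).congr_deriv (by norm_num)
    have h2 : HasDerivAt (fun s => Real.log (d s)) (p * Real.exp s / d s) s :=
      (hd s).log (hdpos s).ne'
    have := h1.sub h2
    refine this.congr_deriv ?_
    simp [hφ_def]
    ring
  have hhmono : MonotoneOn h (Set.Ici (0:ℝ)) := by
    apply monotoneOn_of_deriv_nonneg (convex_Ici 0)
    · exact fun s _ => (hhderiv s).continuousAt.continuousWithinAt
    · exact fun s _ => (hhderiv s).differentiableAt.differentiableWithinAt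
    · intro s hs
      rw [(hhderiv s).deriv]
      exact hφnonneg s (le_of_lt (by simpa using hs))
  have hh0 : h 0 = 0 := by simp [hh_def, hd_def]
  have hht : 0 ≤ h t := by
    have := hhmono Set.self_mem_Ici ht ht
    rw [hh0] at this; exact this
  have hlog : Real.log (d t) ≤ t * p + t ^ 2 / 8 := by
    simp only [hh_def] at hht; linarith
  calc d t = Real.exp (Real.log (d t)) := (Real.exp_log (hdpos t)).symm
    _ ≤ Real.exp (t * p + t ^ 2 / 8) := Real.exp_le_exp.2 hlog

variable {Ω : Type*} [MeasurableSpace Ω] {P : Measure Ω} [IsProbabilityMeasure P]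

lemma integrable_of_mem_Icc {X : Ω → ℝ} (hm : Measurable X)
    (h01 : ∀ ω, X ω ∈ Set.Icc (0:ℝ) 1) : Integrable X P := by
  refine (integrable_const (1:ℝ)).mono' hm.aestronglyMeasurable (Filter.Eventually.of_forall ?_)
  intro ω
  rw [Real.norm_eq_abs, abs_le]
  exact ⟨by linarith [(h01 ω).1], (h01 ω).2⟩

lemma mgf_le_of_mem_Icc {X : Ω → ℝ} (hm : Measurable X)
    (h01 : ∀ ω, X ω ∈ Set.Icc (0:ℝ) 1) {p t : ℝ} (hE : ∫ ω, X ω ∂P = p) (ht : 0 ≤ t) :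
    mgf X P t ≤ Real.exp (t * p + t ^ 2 / 8) := by
  have hXint : Integrable X P := integrable_of_mem_Icc hm h01
  have hp0 : 0 ≤ p := hE ▸ integral_nonneg fun ω => (h01 ω).1
  have hp1 : p ≤ 1 := by
    rw [← hE]
    calc ∫ ω, X ω ∂P ≤ ∫ _, (1:ℝ) ∂P :=
          integral_mono hXint (integrable_const 1) fun ω => (h01 ω).2
      _ = 1 := by simp
  have hpt : ∀ ω, Real.exp (t * X ω) ≤ 1 - X ω + X ω * Real.exp t := by
    intro ω
    have h := convexOn_exp.2 (Set.mem_univ (0:ℝ)) (Set.mem_univ t)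
      (by linarith [(h01 ω).2] : (0:ℝ) ≤ 1 - X ω) (h01 ω).1 (by ring)
    simpa [smul_eq_mul, mul_comm] using h
  have hIexp : Integrable (fun ω => Real.exp (t * X ω)) P := by
    refine (integrable_const (Real.exp t)).mono'
      ((hm.const_mul t).exp).aestronglyMeasurable (Filter.Eventually.of_forall ?_)
    intro ω
    rw [Real.norm_eq_abs, abs_of_pos (Real.exp_pos _)]
    exact Real.exp_le_exp.2 (by nlinarith [(h01 ω).2])
  have hI1 : Integrable (fun ω => (1:ℝ) - X ω) P := (integrable_const 1).sub hXint
  have hI2 : Integrable (fun ω => X ω * Real.exp t) P := hXint.mul_const _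
  have hIrhs : Integrable (fun ω => 1 - X ω + X ω * Real.exp t) P := hI1.add hI2
  calc mgf X P t = ∫ ω, Real.exp (t * X ω) ∂P := rfl
    _ ≤ ∫ ω, (1 - X ω + X ω * Real.exp t) ∂P := integral_mono hIexp hIrhs hpt
    _ = 1 - p + p * Real.exp t := by
        rw [integral_add hI1 hI2, integral_sub (integrable_const 1) hXint,
          integral_mul_const, hE]
        simp
    _ ≤ Real.exp (t * p + t ^ 2 / 8) := hoeff_analytic ⟨hp0, hp1⟩ ht

lemma chernoff_tail {ι : Type*} {Y : ι → Ω → ℝ}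
    (hindep : iIndepFun Y P)
    (hmeas : ∀ i, Measurable (Y i)) (h01 : ∀ i ω, Y i ω ∈ Set.Icc (0:ℝ) 1)
    (s : Finset ι) {p : ℝ} (hE : ∀ i ∈ s, ∫ ω, Y i ω ∂P = p) {ε : ℝ} (hε : 0 ≤ ε) :
    (P {ω | (s.card : ℝ) * (p + ε) ≤ ∑ k ∈ s, Y k ω}).toReal
      ≤ Real.exp (-(2 * s.card * ε ^ 2)) := by
  set t : ℝ := 4 * ε with htdef
  have ht : 0 ≤ t := by positivity
  have hSfun : (fun ω => ∑ k ∈ s, Y k ω) = ∑ k ∈ s, Y k := by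
    ext ω; simp [Finset.sum_apply]
  have hSmeas : Measurable (fun ω => ∑ k ∈ s, Y k ω) :=
    Finset.measurable_sum s fun i _ => hmeas i
  have hint : Integrable (fun ω => Real.exp (t * ∑ k ∈ s, Y k ω)) P := by
    refine (integrable_const (Real.exp (t * s.card))).mono'
      ((hSmeas.const_mul t).exp).aestronglyMeasurable (Filter.Eventually.of_forall ?_)
    intro ω
    rw [Real.norm_eq_abs, abs_of_pos (Real.exp_pos _)]
    refine Real.exp_le_exp.2 (mul_le_mul_of_nonneg_left ?_ ht)
    calc ∑ k ∈ s, Y k ω ≤ ∑ k ∈ s, (1:ℝ) :=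
          Finset.sum_le_sum fun k _ => (h01 k ω).2
      _ = s.card := by simp
  have hch := measure_ge_le_exp_mul_mgf (μ := P) (X := fun ω => ∑ k ∈ s, Y k ω)
    ((s.card : ℝ) * (p + ε)) ht hint
  refine hch.trans ?_
  have hmgf : mgf (fun ω => ∑ k ∈ s, Y k ω) P t = ∏ k ∈ s, mgf (Y k) P t := by
    rw [hSfun]; exact hindep.mgf_sum hmeas s
  have hprod : ∏ k ∈ s, mgf (Y k) P t ≤ Real.exp (s.card * (t * p + t ^ 2 / 8)) := by
    calc ∏ k ∈ s, mgf (Y k) P t ≤ ∏ _k ∈ s, Real.exp (t * p + t ^ 2 / 8) :=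
          Finset.prod_le_prod (fun k _ => mgf_nonneg)
            (fun k hk => mgf_le_of_mem_Icc (hmeas k) (h01 k) (hE k hk) ht)
      _ = Real.exp (t * p + t ^ 2 / 8) ^ s.card := Finset.prod_const _
      _ = Real.exp (s.card * (t * p + t ^ 2 / 8)) := by
          rw [← Real.exp_nat_mul]
  calc Real.exp (-t * ((s.card : ℝ) * (p + ε))) * mgf (fun ω => ∑ k ∈ s, Y k ω) P t
      ≤ Real.exp (-t * ((s.card : ℝ) * (p + ε))) * Real.exp (s.card * (t * p + t ^ 2 / 8)) := by
        rw [hmgf]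
        exact mul_le_mul_of_nonneg_left hprod (Real.exp_pos _).le
    _ = Real.exp (-(2 * s.card * ε ^ 2)) := by
        rw [← Real.exp_add]
        congr 1
        simp only [htdef]
        ring


end AuxHoeffding

/-- Fixed-allocation form of the simple-regret bound for the UCB√· sampling
scheme (Theorem 2 of the paper): if each suboptimal arm `i` receives at least
`c √n / Δ_i²` samples and the best arm at least as many samples as any other
arm, then the expected simple regret of selecting an arm with the greatest
sample mean is at most `2 ∑_{i ≠ *} Δ_i exp (-c √n / 2)`. -/
theorem simple_regret_ucb_sqrt_bound
    {Ω : Type*} [MeasurableSpace Ω] (P : Measure Ω) [IsProbabilityMeasure P]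
    (K : ℕ) (hK : 2 ≤ K)
    (c : ℝ) (hc : 0 < c) (n : ℝ) (hn : 0 < n)
    (nsamp : Fin K → ℕ) (hnsamp : ∀ i, 0 < nsamp i)
    (X : (i : Fin K) → Fin (nsamp i) → Ω → ℝ)
    (hmX : ∀ i k, Measurable (X i k))
    (hindep : iIndepFun
      (fun p : Σ i : Fin K, Fin (nsamp i) => X p.1 p.2) P)
    (hX01 : ∀ i k ω, X i k ω ∈ Set.Icc (0 : ℝ) 1)
    (μ : Fin K → ℝ)
    (hEX : ∀ i k, ∫ ω, X i k ω ∂P = μ i)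
    (star : Fin K) (hstar : ∀ i, i ≠ star → μ i < μ star)
    (hni : ∀ i, i ≠ star →
      (nsamp i : ℝ) ≥ c * Real.sqrt n / (μ star - μ i) ^ 2)
    (hnstar : ∀ i, i ≠ star → nsamp i ≤ nsamp star)
    (J : Ω → Fin K) (hJmeas : Measurable J)
    (hJ : ∀ ω i, (1 / (nsamp i) : ℝ) * ∑ k, X i k ω
        ≤ (1 / (nsamp (J ω)) : ℝ) * ∑ k, X (J ω) k ω) :
    ∫ ω, (μ star - μ (J ω)) ∂P
      ≤ 2 * ∑ i ∈ Finset.univ.filter (· ≠ star),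
          (μ star - μ i) * Real.exp (-c * Real.sqrt n / 2) := by
  classical
  set T : Finset (Fin K) := Finset.univ.filter (· ≠ star) with hT
  -- the finset of samples of arm i, inside the sigma type
  set s : (i : Fin K) → Finset (Σ j : Fin K, Fin (nsamp j)) :=
    fun i => Finset.univ.map ⟨Sigma.mk i, sigma_mk_injective⟩ with hs
  have hscard : ∀ i, (s i).card = nsamp i := by
    intro i; simp [hs]
  have hmX' : ∀ p : Σ j : Fin K, Fin (nsamp j), Measurable (X p.1 p.2) :=
    fun p => hmX p.1 p.2
  have hX01' : ∀ (p : Σ j : Fin K, Fin (nsamp j)) ω, X p.1 p.2 ω ∈ Set.Icc (0:ℝ) 1 :=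
    fun p ω => hX01 p.1 p.2 ω
  -- the complemented family for the lower tail of the best arm
  have hindep' : iIndepFun
      (fun p : Σ j : Fin K, Fin (nsamp j) => fun ω => 1 - X p.1 p.2 ω) P :=
    hindep.comp (fun _ (x : ℝ) => 1 - x) (fun _ => measurable_const.sub measurable_id)
  have hmX'' : ∀ p : Σ j : Fin K, Fin (nsamp j),
      Measurable (fun ω => 1 - X p.1 p.2 ω) :=
    fun p => measurable_const.sub (hmX p.1 p.2)
  have hX01'' : ∀ (p : Σ j : Fin K, Fin (nsamp j)) ω,
      1 - X p.1 p.2 ω ∈ Set.Icc (0:ℝ) 1 := by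
    intro p ω
    obtain ⟨h0, h1⟩ := hX01 p.1 p.2 ω
    exact ⟨by linarith, by linarith⟩
  -- per-arm probability bound
  have key : ∀ i ∈ T, (P (J ⁻¹' {i})).toReal ≤ 2 * Real.exp (-c * Real.sqrt n / 2) := by
    intro i hiT
    have hi : i ≠ star := (Finset.mem_filter.mp hiT).2
    set Δ : ℝ := μ star - μ i with hΔdef
    have hΔ : 0 < Δ := sub_pos.mpr (hstar i hi)
    set ε : ℝ := Δ / 2 with hεdef
    have hε : 0 ≤ ε := by positivity
    clear_value Δ ε
    have hmi : (0:ℝ) < (nsamp i : ℝ) := Nat.cast_pos.mpr (hnsamp i)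
    have hms : (0:ℝ) < (nsamp star : ℝ) := Nat.cast_pos.mpr (hnsamp star)
    -- upper tail for arm i
    have hEi : ∀ p ∈ s i, ∫ ω, X p.1 p.2 ω ∂P = μ i := by
      intro p hp
      simp only [hs, Finset.mem_map, Finset.mem_univ, Function.Embedding.coeFn_mk,
        true_and] at hp
      obtain ⟨k, rfl⟩ := hp
      exact hEX i k
    have tailA := chernoff_tail hindep hmX' hX01' (s i) hEi hε
    -- lower tail for the best arm
    have hEs : ∀ p ∈ s star, ∫ ω, (1 - X p.1 p.2 ω) ∂P = 1 - μ star := by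
      intro p hp
      simp only [hs, Finset.mem_map, Finset.mem_univ, Function.Embedding.coeFn_mk,
        true_and] at hp
      obtain ⟨k, rfl⟩ := hp
      rw [integral_sub (integrable_const 1)
        (integrable_of_mem_Icc (hmX star k) (hX01 star k)), hEX star k]
      simp
    have tailB := chernoff_tail hindep' hmX'' hX01'' (s star) hEs hε
    -- event inclusion
    set A : Set Ω := {ω | ((s i).card : ℝ) * (μ i + ε) ≤ ∑ p ∈ s i, X p.1 p.2 ω} with hA
    set B : Set Ω := {ω | ((s star).card : ℝ) * ((1 - μ star) + ε)
        ≤ ∑ p ∈ s star, (1 - X p.1 p.2 ω)} with hB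
    have hincl : J ⁻¹' {i} ⊆ A ∪ B := by
      intro ω hω
      have hJω : J ω = i := hω
      by_contra hnot
      have hnA : ω ∉ A := fun h => hnot (Or.inl h)
      have hnB : ω ∉ B := fun h => hnot (Or.inr h)
      simp only [hA, Set.mem_setOf_eq, not_le, hscard, hs, Finset.sum_map, Finset.card_map, Finset.card_fin,
        Function.Embedding.coeFn_mk] at hnA
      simp only [hB, Set.mem_setOf_eq, not_le, hscard, hs, Finset.sum_map, Finset.card_map, Finset.card_fin,
        Function.Embedding.coeFn_mk] at hnB
      -- hnA : ∑ k, X i k ω < nsamp i * (μ i + ε)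
      -- hnB : ∑ k, (1 - X star k ω) < nsamp star * ((1 - μ star) + ε)
      have hsum_sub : ∑ k : Fin (nsamp star), (1 - X star k ω)
          = (nsamp star : ℝ) - ∑ k, X star k ω := by
        rw [Finset.sum_sub_distrib]
        simp
      rw [hsum_sub] at hnB
      have hBs : (nsamp star : ℝ) * (μ star - ε) < ∑ k, X star k ω := by nlinarith
      have hJs := hJ ω star
      rw [hJω] at hJs
      have hmid : μ star - ε = μ i + ε := by
        simp only [hεdef, hΔdef]; ring
      have h1 : μ star - ε < (1 / (nsamp star) : ℝ) * ∑ k, X star k ω := by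
        rw [one_div, inv_mul_eq_div, lt_div_iff₀ hms]
        linarith
      have h2 : (1 / (nsamp i) : ℝ) * ∑ k, X i k ω < μ i + ε := by
        rw [one_div, inv_mul_eq_div, div_lt_iff₀ hmi]
        linarith
      linarith [hmid]
    -- exponent comparisons
    have hcΔ : c * Real.sqrt n ≤ (nsamp i : ℝ) * Δ ^ 2 := by
      have := hni i hi
      rw [ge_iff_le, div_le_iff₀ (pow_pos (sub_pos.mpr (hstar i hi)) 2)] at this
      simpa [hΔdef] using this
    have hexpA : Real.exp (-(2 * ((s i).card : ℝ) * ε ^ 2))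
        ≤ Real.exp (-c * Real.sqrt n / 2) := by
      apply Real.exp_le_exp.2
      rw [hscard]
      have h24 : 2 * ((nsamp i : ℝ)) * (ε) ^ 2 = (nsamp i : ℝ) * Δ ^ 2 / 2 := by
        simp only [hεdef]; ring
      rw [h24]
      linarith
    have hexpB : Real.exp (-(2 * ((s star).card : ℝ) * ε ^ 2))
        ≤ Real.exp (-c * Real.sqrt n / 2) := by
      apply Real.exp_le_exp.2
      rw [hscard]
      have hcast : (nsamp i : ℝ) ≤ (nsamp star : ℝ) := Nat.cast_le.mpr (hnstar i hi)
      have h24 : 2 * ((nsamp star : ℝ)) * (ε) ^ 2 = (nsamp star : ℝ) * Δ ^ 2 / 2 := by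
        simp only [hεdef]; ring
      rw [h24]
      have := mul_le_mul_of_nonneg_right hcast (sq_nonneg Δ)
      linarith
    calc (P (J ⁻¹' {i})).toReal ≤ (P A).toReal + (P B).toReal := by
          rw [← ENNReal.toReal_add (measure_ne_top P A) (measure_ne_top P B)]
          exact ENNReal.toReal_mono
            (by finiteness)
            ((measure_mono hincl).trans (measure_union_le A B))
      _ ≤ Real.exp (-c * Real.sqrt n / 2) + Real.exp (-c * Real.sqrt n / 2) := by
          gcongr
          · exact tailA.trans hexpA
          · exact tailB.trans hexpB
      _ = 2 * Real.exp (-c * Real.sqrt n / 2) := by ring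
  -- decompose the regret integral
  have hfg : ∀ ω, μ star - μ (J ω)
      = ∑ i ∈ T, (J ⁻¹' {i}).indicator (fun _ => μ star - μ i) ω := by
    intro ω
    by_cases hJs : J ω = star
    · rw [Finset.sum_eq_zero, hJs, sub_self]
      intro b hb
      apply Set.indicator_of_notMem
      simp only [Set.mem_preimage, Set.mem_singleton_iff, hJs]
      exact fun h => (Finset.mem_filter.mp hb).2 h.symm
    · rw [Finset.sum_eq_single (J ω)]
      · rw [Set.indicator_of_mem (by simp : ω ∈ J ⁻¹' {J ω})]
      · intro b hb hbJ
        apply Set.indicator_of_notMem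
        simp only [Set.mem_preimage, Set.mem_singleton_iff]
        exact fun h => hbJ h.symm
      · exact fun h => absurd (Finset.mem_filter.mpr ⟨Finset.mem_univ (J ω), hJs⟩) h
  have hmeasJi : ∀ i : Fin K, MeasurableSet (J ⁻¹' {i}) :=
    fun i => hJmeas (measurableSet_singleton i)
  calc ∫ ω, (μ star - μ (J ω)) ∂P
      = ∫ ω, ∑ i ∈ T, (J ⁻¹' {i}).indicator (fun _ => μ star - μ i) ω ∂P := by
        exact integral_congr_ae (Filter.Eventually.of_forall hfg)
    _ = ∑ i ∈ T, ∫ ω, (J ⁻¹' {i}).indicator (fun _ => μ star - μ i) ω ∂P :=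
        integral_finset_sum T fun i _ =>
          (integrable_const _).indicator (hmeasJi i)
    _ = ∑ i ∈ T, (P (J ⁻¹' {i})).toReal * (μ star - μ i) := by
        refine Finset.sum_congr rfl fun i _ => ?_
        rw [integral_indicator_const _ (hmeasJi i), smul_eq_mul, measureReal_def]
    _ ≤ ∑ i ∈ T, (2 * Real.exp (-c * Real.sqrt n / 2)) * (μ star - μ i) := by
        refine Finset.sum_le_sum fun i hi => ?_
        have hΔ : 0 ≤ μ star - μ i :=
          le_of_lt (sub_pos.mpr (hstar i (Finset.mem_filter.mp hi).2))
        exact mul_le_mul_of_nonneg_right (key i hi) hΔ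
    _ = 2 * ∑ i ∈ T, (μ star - μ i) * Real.exp (-c * Real.sqrt n / 2) := by
        rw [Finset.mul_sum]
        exact Finset.sum_congr rfl fun i _ => by ring
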